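/- Let f be a three times continuously differentiable probability density on ℝ with compact support [a,b], positive on (a,b), whose critical points in (a,b) are finitely many and all nondegenerate, with local minima m_1 < ⋯ < m_{r−1} in (a,b), and let P be the probability measure with density f. Let K ⊂ (a,b) be a compact set containing all critical points of f in its interior, and let (g_n) be twice continuously differentiable functions with g_n' → f' and g_n'' → f'' uniformly, so that for all n beyond some n_0 the function g_n has exactly r − 1 local minima m̂_{n,1} < ⋯ < m̂_{n,r−1} in K. Let 𝒞̂_n = {(m̂_{n,0}, m̂_{n,1}), …, (m̂_{n,r−1}, m̂_{n,r})} (with m̂_{n,0} = −∞, m̂_{n,r} = +∞) be the modal clustering induced by g_n and 𝒞_0 the modal clustering induced by f. Then d_P(𝒞̂_n, 𝒞_0) → 0 as n → ∞. -/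

import Mathlib

open MeasureTheory Filter Set
open scoped ENNReal Topology

/-- The modal (interval) clustering of `ℝ` determined by cut points `m 0 < ⋯ < m (r-2)`:
cluster `i` is the open interval `(m (i-1), m i)`, with `m (-1) = -∞` and `m (r-1) = +∞`. -/
def intervalClusters (r : ℕ) (m : Fin (r - 1) → ℝ) (i : Fin r) : Set ℝ :=
  {x : ℝ | (∀ j : Fin (r - 1), (j : ℕ) < (i : ℕ) → m j < x) ∧
           (∀ j : Fin (r - 1), (i : ℕ) ≤ (j : ℕ) → x < m j)}

/-- The distance in `P`-measure between two clusterings with the same number `r` of clusters: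
`d_P(𝒞,𝒟) = (1/2) min_{σ ∈ 𝒫_r} Σᵢ P(Cᵢ △ D_{σ(i)})`. -/
noncomputable def clusterDistP {X : Type*} [MeasurableSpace X] {r : ℕ}
    (P : Measure X) (C D : Fin r → Set X) : ℝ≥0∞ :=
  (⨅ σ : Equiv.Perm (Fin r), ∑ i, P (symmDiff (C i) (D (σ i)))) / 2

set_option linter.deprecated false in
lemma finStrictMonoId {N : ℕ} (k : Fin N → Fin N) (hk : StrictMono k) (i : Fin N) : k i = i := by
  have hsurj : Function.Surjective k := Finite.surjective_of_injective hk.injective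
  have : k = id := (StrictMono.range_inj hk strictMono_id).1 (by
    rw [Set.range_id, Set.range_eq_univ]; exact hsurj)
  rw [this]; rfl

lemma symmDiff_clusters_subset (r : ℕ) (m m' : Fin (r-1) → ℝ) (i : Fin r) :
    symmDiff (intervalClusters r m' i) (intervalClusters r m i) ⊆
      ⋃ j : Fin (r-1), uIcc (m' j) (m j) := by
  have key : ∀ (p q : Fin (r-1) → ℝ), intervalClusters r p i \ intervalClusters r q i ⊆
      ⋃ j : Fin (r-1), uIcc (p j) (q j) := by
    intro p q x hx
    obtain ⟨⟨h1, h2⟩, hn⟩ := hx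
    simp only [intervalClusters, mem_setOf_eq, not_and_or, not_forall] at hn
    rcases hn with ⟨j, hji, hj⟩ | ⟨j, hji, hj⟩
    · refine mem_iUnion.2 ⟨j, ?_⟩
      rw [mem_uIcc]
      exact Or.inl ⟨(h1 j hji).le, not_lt.1 hj⟩
    · refine mem_iUnion.2 ⟨j, ?_⟩
      rw [mem_uIcc]
      exact Or.inr ⟨not_lt.1 hj, (h2 j hji).le⟩
  intro x hx
  rcases (Set.mem_symmDiff.1 hx) with ⟨h, h'⟩ | ⟨h, h'⟩
  · exact key m' m ⟨h, h'⟩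
  · rcases mem_iUnion.1 (key m m' ⟨h, h'⟩) with ⟨j, hj⟩
    exact mem_iUnion.2 ⟨j, uIcc_comm (m j) (m' j) ▸ hj⟩

/-- At a local minimum where the second derivative is nonzero, it is positive. -/
lemma deriv2_pos_of_isLocalMin (f : ℝ → ℝ) (hfd : Differentiable ℝ f)
    (hf1d : Differentiable ℝ (deriv f)) (hf2c : Continuous (deriv (deriv f)))
    (x : ℝ) (hmin : IsLocalMin f x) (hne : deriv (deriv f) x ≠ 0) :
    0 < deriv (deriv f) x := by
  rcases hne.lt_or_gt with hlt | hgt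
  · exfalso
    have h1 : ∀ᶠ y in 𝓝 x, deriv (deriv f) y < 0 :=
      hf2c.continuousAt.eventually (gt_mem_nhds hlt)
    obtain ⟨η, hη, hball⟩ := Metric.eventually_nhds_iff_ball.1 h1
    set η' := η / 2 with hη'
    have hη'pos : 0 < η' := by positivity
    have hAnti : StrictAntiOn (deriv f) (Icc (x - η') (x + η')) := by
      refine strictAntiOn_of_deriv_neg (convex_Icc _ _) hf1d.continuous.continuousOn ?_
      intro y hy
      rw [interior_Icc] at hy
      refine hball y ?_
      rw [Metric.mem_ball, Real.dist_eq]
      rw [abs_lt]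
      constructor <;> [linarith [hy.1]; linarith [hy.2]]
    have hd0 : deriv f x = 0 := hmin.deriv_eq_zero
    have hMono : StrictMonoOn f (Icc (x - η') x) := by
      refine strictMonoOn_of_deriv_pos (convex_Icc _ _) hfd.continuous.continuousOn ?_
      intro y hy
      rw [interior_Icc] at hy
      have hyI : y ∈ Icc (x - η') (x + η') := ⟨hy.1.le, by linarith [hy.2]⟩
      have hxI : x ∈ Icc (x - η') (x + η') := ⟨by linarith, by linarith⟩
      have := hAnti hyI hxI hy.2
      rw [hd0] at this
      linarith
    have h2 : ∀ᶠ y in 𝓝[<] x, f x ≤ f y := hmin.filter_mono nhdsWithin_le_nhds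
    have h3 : Ioo (x - η') x ∈ 𝓝[<] x :=
      Ioo_mem_nhdsLT_of_mem ⟨by linarith, le_refl x⟩
    obtain ⟨y, hy1, hy2⟩ := (h2.and (eventually_mem_set.2 h3)).exists
    have : f y < f x :=
      hMono ⟨hy2.1.le, hy2.2.le⟩ ⟨by linarith [hy2.1], le_refl x⟩ hy2.2
    linarith
  · exact hgt

/-- Consistency of plug-in modal clustering in the distance in `P`-measure: if `f` is a `C³`
probability density with compact support `[a,b]`, positive on `(a,b)`, with finitely many
nondegenerate critical points and local minima `m₁ < ⋯ < m_{r-1}`, and `gₙ` are `C²` functions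
with `gₙ' → f'`, `gₙ'' → f''` uniformly whose local minima in `K` are eventually
`m̂_{n,1} < ⋯ < m̂_{n,r-1}`, then `d_P(𝒞̂ₙ, 𝒞₀) → 0`. -/
theorem modal_clustering_consistent_distP
    (f : ℝ → ℝ) (hf : ContDiff ℝ 3 f)
    (a b : ℝ) (hab : a < b)
    (hf_nonneg : ∀ x, 0 ≤ f x)
    (hf_int : ∫ x, f x = 1)
    (hf_supp : tsupport f = Set.Icc a b)
    (hf_pos : ∀ x ∈ Set.Ioo a b, 0 < f x)
    (hcrit_fin : {x | x ∈ Set.Ioo a b ∧ deriv f x = 0}.Finite)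
    (hnondeg : ∀ x ∈ Set.Ioo a b, deriv f x = 0 → deriv (deriv f) x ≠ 0)
    (P : Measure ℝ) (hP : P = volume.withDensity (fun x => ENNReal.ofReal (f x)))
    (r : ℕ) (hr : 1 ≤ r)
    (m : Fin (r - 1) → ℝ) (hm_mono : StrictMono m)
    (hm_mem : ∀ j, m j ∈ Set.Ioo a b)
    (hm_min : {x | x ∈ Set.Ioo a b ∧ IsLocalMin f x} = Set.range m)
    (K : Set ℝ) (hK : IsCompact K) (hK_sub : K ⊆ Set.Ioo a b)
    (hK_crit : {x | x ∈ Set.Ioo a b ∧ deriv f x = 0} ⊆ interior K)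
    (g : ℕ → ℝ → ℝ) (hg : ∀ n, ContDiff ℝ 2 (g n))
    (hg1 : TendstoUniformly (fun n => deriv (g n)) (deriv f) atTop)
    (hg2 : TendstoUniformly (fun n => deriv (deriv (g n))) (deriv (deriv f)) atTop)
    (mhat : ℕ → Fin (r - 1) → ℝ) (n₀ : ℕ)
    (hmhat_mono : ∀ n ≥ n₀, StrictMono (mhat n))
    (hmhat_min : ∀ n ≥ n₀, {x | x ∈ K ∧ IsLocalMin (g n) x} = Set.range (mhat n)) :
    Tendsto (fun n => clusterDistP P (intervalClusters r (mhat n)) (intervalClusters r m))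
      atTop (nhds 0) := by
  -- basic smoothness facts
  have h3 : Differentiable ℝ f ∧ ContDiff ℝ 2 (deriv f) := by
    rw [show (3 : WithTop ℕ∞) = 2 + 1 by norm_num, contDiff_succ_iff_deriv] at hf
    exact ⟨hf.1, hf.2.2⟩
  obtain ⟨hfd, hf1⟩ := h3
  have h2 : Differentiable ℝ (deriv f) ∧ ContDiff ℝ 1 (deriv (deriv f)) := by
    rw [show (2 : WithTop ℕ∞) = 1 + 1 by norm_num, contDiff_succ_iff_deriv] at hf1
    exact ⟨hf1.1, hf1.2.2⟩
  obtain ⟨hf1d, hf2⟩ := h2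
  have hf2c : Continuous (deriv (deriv f)) := hf2.continuous
  have hgd : ∀ n, Differentiable ℝ (g n) ∧ Differentiable ℝ (deriv (g n)) ∧
      Continuous (deriv (deriv (g n))) := by
    intro n
    have h := hg n
    rw [show (2 : WithTop ℕ∞) = 1 + 1 by norm_num, contDiff_succ_iff_deriv] at h
    obtain ⟨hd, -, h1⟩ := h
    rw [contDiff_one_iff_deriv] at h1
    exact ⟨hd, h1.1, h1.2⟩
  -- facts about the minima m j
  have hmj : ∀ j, IsLocalMin f (m j) := by
    intro j
    have : m j ∈ {x | x ∈ Set.Ioo a b ∧ IsLocalMin f x} := by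
      rw [hm_min]; exact mem_range_self j
    exact this.2
  have hderiv0 : ∀ j, deriv f (m j) = 0 := fun j => (hmj j).deriv_eq_zero
  have hmK : ∀ j, m j ∈ interior K := fun j => hK_crit ⟨hm_mem j, hderiv0 j⟩
  have hf2pos : ∀ j, 0 < deriv (deriv f) (m j) := fun j =>
    deriv2_pos_of_isLocalMin f hfd hf1d hf2c (m j) (hmj j)
      (hnondeg (m j) (hm_mem j) (hderiv0 j))
  -- KEY: eventual proximity
  have hkey : ∀ ε > (0:ℝ), ∀ᶠ n in atTop, ∀ j, |mhat n j - m j| < ε := by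
    intro ε hε
    -- separation constant
    obtain ⟨ε₀, hε₀pos, hε₀le, hsep⟩ : ∃ ε₀ > (0:ℝ), ε₀ ≤ ε ∧
        ∀ j j' : Fin (r-1), j < j' → m j + 2*ε₀ ≤ m j' := by
      by_cases H : ∃ p : Fin (r-1) × Fin (r-1), p.1 < p.2
      · set s := Finset.univ.filter (fun p : Fin (r-1) × Fin (r-1) => p.1 < p.2) with hs_def
        have hs : s.Nonempty := ⟨H.choose, by simp [hs_def, H.choose_spec]⟩
        set t := s.inf' hs (fun p => m p.2 - m p.1) with ht_def
        have ht : 0 < t := by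
          rw [ht_def, Finset.lt_inf'_iff]
          intro p hp
          rw [hs_def, Finset.mem_filter] at hp
          exact sub_pos.2 (hm_mono hp.2)
        refine ⟨min ε (t/2), by positivity, min_le_left _ _, ?_⟩
        intro j j' hjj'
        have hmem : (j, j') ∈ s := by simp [hs_def, hjj']
        have hle := Finset.inf'_le (fun p : Fin (r-1) × Fin (r-1) => m p.2 - m p.1) hmem
        have h2 : min ε (t/2) ≤ t/2 := min_le_right _ _
        rw [← ht_def] at hle
        linarith
      · push_neg at H
        exact ⟨ε, hε, le_refl ε, fun j j' h => absurd h (not_lt.2 (H (j, j')))⟩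
    -- choose δ j
    have hδex : ∀ j : Fin (r-1), ∃ δ : ℝ, 0 < δ ∧ δ ≤ ε₀ ∧
        Icc (m j - δ) (m j + δ) ⊆ interior K ∧
        (∀ x ∈ Icc (m j - δ) (m j + δ),
          deriv (deriv f) (m j) / 2 ≤ deriv (deriv f) x) ∧
        deriv f (m j - δ) < 0 ∧ 0 < deriv f (m j + δ) := by
      intro j
      set c := deriv (deriv f) (m j) with hc
      have hcpos : 0 < c := hf2pos j
      have h1 : ∀ᶠ y in 𝓝 (m j), c/2 < deriv (deriv f) y :=
        hf2c.continuousAt.eventually (lt_mem_nhds (by linarith))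
      have h2 : ∀ᶠ y in 𝓝 (m j), y ∈ interior K :=
        isOpen_interior.mem_nhds (hmK j)
      obtain ⟨η, hη, hball⟩ := Metric.eventually_nhds_iff_ball.1 (h1.and h2)
      set δ := min (η/2) ε₀ with hδ_def
      have hδpos : 0 < δ := by positivity
      have hδη : δ < η := lt_of_le_of_lt (min_le_left _ _) (by linarith)
      have hIcc : Icc (m j - δ) (m j + δ) ⊆ Metric.ball (m j) η := by
        intro x hx
        rw [Metric.mem_ball, Real.dist_eq, abs_lt]
        constructor <;> [linarith [hx.1]; linarith [hx.2]]
      have hsubK : Icc (m j - δ) (m j + δ) ⊆ interior K := fun x hx => (hball x (hIcc hx)).2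
      have hf2b : ∀ x ∈ Icc (m j - δ) (m j + δ), c/2 ≤ deriv (deriv f) x :=
        fun x hx => (hball x (hIcc hx)).1.le
      have hmono : StrictMonoOn (deriv f) (Icc (m j - δ) (m j + δ)) := by
        refine strictMonoOn_of_deriv_pos (convex_Icc _ _) hf1d.continuous.continuousOn ?_
        intro x hx
        rw [interior_Icc] at hx
        have := hf2b x (Ioo_subset_Icc_self hx)
        linarith
      have hmem1 : m j - δ ∈ Icc (m j - δ) (m j + δ) := ⟨le_refl _, by linarith⟩
      have hmem2 : m j ∈ Icc (m j - δ) (m j + δ) := ⟨by linarith, by linarith⟩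
      have hmem3 : m j + δ ∈ Icc (m j - δ) (m j + δ) := ⟨by linarith, le_refl _⟩
      refine ⟨δ, hδpos, min_le_right _ _, hsubK, hf2b, ?_, ?_⟩
      · have := hmono hmem1 hmem2 (by linarith)
        rw [hderiv0 j] at this; exact this
      · have := hmono hmem2 hmem3 (by linarith)
        rw [hderiv0 j] at this; exact this
    choose δ hδpos hδε₀ hδK hδf2 hδl hδr using hδex
    -- eventual per-j conditions on g n
    have hPj : ∀ j : Fin (r-1), ∀ᶠ n in atTop,
        deriv (g n) (m j - δ j) < 0 ∧ 0 < deriv (g n) (m j + δ j) ∧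
        ∀ x ∈ Icc (m j - δ j) (m j + δ j), 0 < deriv (deriv (g n)) x := by
      intro j
      set c := deriv (deriv f) (m j) with hc
      have hcpos : 0 < c := hf2pos j
      have e1 := (Metric.tendstoUniformly_iff.1 hg1)
        (min (-(deriv f (m j - δ j))) (deriv f (m j + δ j)))
        (lt_min (by linarith [hδl j]) (hδr j))
      have e2 := (Metric.tendstoUniformly_iff.1 hg2) (c/4) (by linarith)
      filter_upwards [e1, e2] with n h1 h2
      refine ⟨?_, ?_, ?_⟩
      · have hd := h1 (m j - δ j)
        rw [Real.dist_eq, abs_lt] at hd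
        have := min_le_left (-(deriv f (m j - δ j))) (deriv f (m j + δ j))
        linarith [hd.1, hd.2]
      · have hd := h1 (m j + δ j)
        rw [Real.dist_eq, abs_lt] at hd
        have := min_le_right (-(deriv f (m j - δ j))) (deriv f (m j + δ j))
        linarith [hd.1, hd.2]
      · intro x hx
        have hd := h2 x
        rw [Real.dist_eq, abs_lt] at hd
        have := hδf2 j x hx
        rw [← hc] at this
        linarith [hd.1, hd.2]
    have hev : ∀ᶠ n in atTop, n ≥ n₀ ∧ ∀ j,
        (deriv (g n) (m j - δ j) < 0 ∧ 0 < deriv (g n) (m j + δ j) ∧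
        ∀ x ∈ Icc (m j - δ j) (m j + δ j), 0 < deriv (deriv (g n)) x) :=
      (eventually_ge_atTop n₀).and (eventually_all.2 hPj)
    filter_upwards [hev] with n hn
    obtain ⟨hn₀, hn⟩ := hn
    -- construct local minima of g n near each m j
    have hx : ∀ j : Fin (r-1), ∃ x ∈ Ioo (m j - δ j) (m j + δ j), IsLocalMin (g n) x := by
      intro j
      obtain ⟨h1, h2, h3⟩ := hn j
      have hgc : ContinuousOn (deriv (g n)) (Icc (m j - δ j) (m j + δ j)) :=
        ((hgd n).2.1).continuous.continuousOn
      have h0 : (0:ℝ) ∈ Ioo (deriv (g n) (m j - δ j)) (deriv (g n) (m j + δ j)) := ⟨h1, h2⟩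
      obtain ⟨x, hxI, hx0⟩ := intermediate_value_Ioo (by linarith [hδpos j]) hgc h0
      have hmono : StrictMonoOn (deriv (g n)) (Icc (m j - δ j) (m j + δ j)) := by
        refine strictMonoOn_of_deriv_pos (convex_Icc _ _) hgc ?_
        intro y hy
        rw [interior_Icc] at hy
        exact h3 y (Ioo_subset_Icc_self hy)
      refine ⟨x, hxI, ?_⟩
      refine isLocalMin_of_deriv_Ioo hxI.1 hxI.2 ((hgd n).1.continuous.continuousAt)
        ((hgd n).1.differentiableOn) ((hgd n).1.differentiableOn) ?_ ?_
      · intro y hy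
        have hyI : y ∈ Icc (m j - δ j) (m j + δ j) := ⟨hy.1.le, le_trans hy.2.le hxI.2.le⟩
        have := hmono hyI (Ioo_subset_Icc_self hxI) hy.2
        rw [hx0] at this
        linarith
      · intro y hy
        have hyI : y ∈ Icc (m j - δ j) (m j + δ j) := ⟨le_trans hxI.1.le hy.1.le, hy.2.le⟩
        have := hmono (Ioo_subset_Icc_self hxI) hyI hy.1
        rw [hx0] at this
        linarith
    choose x hxI hxmin using hx
    have hxR : ∀ j, x j ∈ Set.range (mhat n) := by
      intro j
      rw [← hmhat_min n hn₀]
      exact ⟨interior_subset (hδK j (Ioo_subset_Icc_self (hxI j))), hxmin j⟩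
    choose k hk using hxR
    have hkmono : StrictMono k := by
      intro j j' hjj'
      have hord : x j < x j' := by
        have h1 := (hxI j).2
        have h2 := (hxI j').1
        have h3 := hsep j j' hjj'
        have h4 := hδε₀ j
        have h5 := hδε₀ j'
        linarith
      have := (hmhat_mono n hn₀).lt_iff_lt (a := k j) (b := k j')
      rw [hk j, hk j'] at this
      exact this.1 hord
    intro j
    have hkj : k j = j := finStrictMonoId k hkmono j
    have hxj : mhat n j = x j := by have h := hk j; rwa [hkj] at h
    rw [hxj, abs_sub_lt_iff]
    have h1 := (hxI j).1
    have h2 := (hxI j).2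
    have h3 := hδε₀ j
    constructor <;> linarith
  -- convergence of mhat
  have hconv : ∀ j, Tendsto (fun n => mhat n j) atTop (𝓝 (m j)) := by
    intro j
    rw [Metric.tendsto_atTop]
    intro ε hε
    obtain ⟨N, hN⟩ := eventually_atTop.1 (hkey ε hε)
    exact ⟨N, fun n hn => by rw [Real.dist_eq]; exact hN n hn j⟩
  -- Step 2: measure convergence
  have hsupp : HasCompactSupport f := by
    rw [HasCompactSupport, hf_supp]; exact isCompact_Icc
  obtain ⟨x₀, hx₀⟩ := hf.continuous.exists_forall_ge_of_hasCompactSupport hsupp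
  set M := f x₀ with hM
  have hPle : ∀ s : Set ℝ, MeasurableSet s → P s ≤ ENNReal.ofReal M * volume s := by
    intro s hs
    rw [hP, withDensity_apply _ hs]
    calc ∫⁻ y in s, ENNReal.ofReal (f y)
        ≤ ∫⁻ _y in s, ENNReal.ofReal M :=
          setLIntegral_mono measurable_const (fun y _ => ENNReal.ofReal_le_ofReal (hx₀ y))
      _ = ENNReal.ofReal M * volume s := by rw [setLIntegral_const]
  have hS : ∀ j : Fin (r-1), Tendsto
      (fun n => ENNReal.ofReal M * ENNReal.ofReal |m j - mhat n j|) atTop (𝓝 0) := by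
    intro j
    have h1 : Tendsto (fun n => |m j - mhat n j|) atTop (𝓝 0) := by
      have := (tendsto_const_nhds (x := m j) (f := atTop)).sub (hconv j)
      rw [sub_self] at this
      simpa using this.abs
    have h2 : Tendsto (fun n => ENNReal.ofReal |m j - mhat n j|) atTop (𝓝 0) := by
      have := ENNReal.tendsto_ofReal h1
      simpa using this
    have h3 := ENNReal.Tendsto.const_mul (a := ENNReal.ofReal M) h2 (Or.inr ENNReal.ofReal_ne_top)
    simpa using h3
  have hterm : ∀ i : Fin r, Tendsto
      (fun n => P (symmDiff (intervalClusters r (mhat n) i) (intervalClusters r m i)))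
      atTop (𝓝 0) := by
    intro i
    have hub : ∀ n, P (symmDiff (intervalClusters r (mhat n) i) (intervalClusters r m i)) ≤
        ∑ j : Fin (r-1), ENNReal.ofReal M * ENNReal.ofReal |m j - mhat n j| := by
      intro n
      calc P (symmDiff (intervalClusters r (mhat n) i) (intervalClusters r m i))
          ≤ P (⋃ j : Fin (r-1), uIcc (mhat n j) (m j)) :=
            measure_mono (symmDiff_clusters_subset r m (mhat n) i)
        _ ≤ ∑ j : Fin (r-1), P (uIcc (mhat n j) (m j)) := measure_iUnion_fintype_le _ _
        _ ≤ ∑ j : Fin (r-1), ENNReal.ofReal M * ENNReal.ofReal |m j - mhat n j| := by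
            refine Finset.sum_le_sum fun j _ => ?_
            have := hPle _ (measurableSet_uIcc (a := mhat n j) (b := m j))
            rwa [Real.volume_interval] at this
    have hsum : Tendsto (fun n => ∑ j : Fin (r-1),
        ENNReal.ofReal M * ENNReal.ofReal |m j - mhat n j|) atTop (𝓝 0) := by
      have := tendsto_finset_sum (Finset.univ : Finset (Fin (r-1))) (fun j _ => hS j)
      simpa using this
    exact tendsto_of_tendsto_of_tendsto_of_le_of_le tendsto_const_nhds hsum
      (fun n => zero_le) hub
  have hh : Tendsto (fun n => ∑ i : Fin r,
      P (symmDiff (intervalClusters r (mhat n) i) (intervalClusters r m i))) atTop (𝓝 0) := by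
    have := tendsto_finset_sum (Finset.univ : Finset (Fin r)) (fun i _ => hterm i)
    simpa using this
  refine tendsto_of_tendsto_of_tendsto_of_le_of_le tendsto_const_nhds hh
    (fun n => zero_le) ?_
  intro n
  calc clusterDistP P (intervalClusters r (mhat n)) (intervalClusters r m)
      ≤ (∑ i, P (symmDiff (intervalClusters r (mhat n) i)
          (intervalClusters r m ((Equiv.refl (Fin r)) i)))) / 2 :=
        ENNReal.div_le_div_right (iInf_le _ (Equiv.refl (Fin r))) 2
    _ ≤ ∑ i, P (symmDiff (intervalClusters r (mhat n) i) (intervalClusters r m i)) := by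
        simpa using ENNReal.half_le_self (a := ∑ i, P (symmDiff (intervalClusters r (mhat n) i) (intervalClusters r m i)))
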